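/- A signed graph (G,σ) admits a nowhere-zero 2-flow if and only if each component of (G,σ) is eulerian and has an even number of negative edges. -/

import Mathlib

/-- A signed graph: a multigraph (loops and multiple edges allowed) with vertex type `V`
and edge type `E`, where edge `e` joins `fst e` and `snd e`, together with a signature
`sign : E → ℤ` taking values in `{1, -1}`. -/
structure SignedGraph (V E : Type) where
  fst : E → V
  snd : E → V
  sign : E → ℤ
  sign_unit : ∀ e, sign e = 1 ∨ sign e = -1

namespace SignedGraph

variable {V E : Type}

/-- A circuit in a signed graph: pairwise distinct vertices `vert 0, …, vert (n-1)` and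
pairwise distinct edges `edge 0, …, edge (n-1)` with `edge i` joining `vert i` and
`vert ((i+1) % n)`.  (`n = 1` gives a loop, `n = 2` a digon.) -/
structure Circuit (G : SignedGraph V E) where
  n : ℕ
  n_pos : 0 < n
  vert : ℕ → V
  edge : ℕ → E
  vert_inj : ∀ i < n, ∀ j < n, vert i = vert j → i = j
  edge_inj : ∀ i < n, ∀ j < n, edge i = edge j → i = j
  ends : ∀ i < n,
    (G.fst (edge i) = vert i ∧ G.snd (edge i) = vert ((i + 1) % n)) ∨
    (G.snd (edge i) = vert i ∧ G.fst (edge i) = vert ((i + 1) % n))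

namespace Circuit

variable {G : SignedGraph V E}

/-- Edge set of a circuit. -/
def edgeSet (c : Circuit G) : Set E := {e | ∃ i < c.n, c.edge i = e}

/-- Vertex set of a circuit. -/
def vertSet (c : Circuit G) : Set V := {v | ∃ i < c.n, c.vert i = v}

/-- The number of negative edges of a circuit. -/
noncomputable def negCount (c : Circuit G) : ℕ :=
  {i | i < c.n ∧ G.sign (c.edge i) = -1}.ncard

/-- A circuit is balanced if it contains an even number of negative edges. -/
def IsBalanced (c : Circuit G) : Prop := Even c.negCount

end Circuit

variable (G : SignedGraph V E)

/-- The endpoint of a half edge `(e, b)`: each edge `e` is regarded as the two half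
edges `(e, true)` (at `fst e`) and `(e, false)` (at `snd e`). -/
def ep (h : E × Bool) : V := if h.2 then G.fst h.1 else G.snd h.1

/-- An orientation assigns `±1` to each half edge so that the two half edges of an
edge `e` multiply to `- sign e`. -/
def IsOrientation (τ : E × Bool → ℤ) : Prop :=
  (∀ h, τ h = 1 ∨ τ h = -1) ∧ ∀ e : E, τ (e, true) * τ (e, false) = - G.sign e

/-- The boundary of `(τ, f)` at a vertex `v`: the sum of `τ h * f e` over all half
edges `h` of edges `e` incident with `v`. -/
noncomputable def boundary (τ : E × Bool → ℤ) (f : E → ℤ) (v : V) : ℤ :=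
  ∑ᶠ h ∈ {h : E × Bool | G.ep h = v}, τ h * f h.1

/-- `(τ, f)` is a `k`-flow: `τ` is an orientation, `|f e| ≤ k - 1` everywhere, and the
boundary vanishes at every vertex. -/
def IsFlow (k : ℤ) (τ : E × Bool → ℤ) (f : E → ℤ) : Prop :=
  G.IsOrientation τ ∧ (∀ e, |f e| ≤ k - 1) ∧ ∀ v, G.boundary τ f v = 0

/-- `(τ, f)` is a `ℤ_k`-flow: `τ` is an orientation, `|f e| ≤ k - 1` everywhere, and the
boundary is divisible by `k` at every vertex. -/
def IsZFlow (k : ℤ) (τ : E × Bool → ℤ) (f : E → ℤ) : Prop :=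
  G.IsOrientation τ ∧ (∀ e, |f e| ≤ k - 1) ∧ ∀ v, k ∣ G.boundary τ f v

/-- `f` is nowhere-zero. -/
def NowhereZero (_G : SignedGraph V E) (f : E → ℤ) : Prop := ∀ e, f e ≠ 0

/-- `G` admits a nowhere-zero `k`-flow. -/
def HasNZFlow (k : ℤ) : Prop := ∃ τ f, G.IsFlow k τ f ∧ G.NowhereZero f

/-- `G` is flow-admissible: it admits a nowhere-zero `k`-flow for some integer `k ≥ 2`. -/
def FlowAdmissible : Prop := ∃ k : ℤ, 2 ≤ k ∧ G.HasNZFlow k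

/-- The support of `f`. -/
def supp (_G : SignedGraph V E) (f : E → ℤ) : Set E := {e | f e ≠ 0}

/-- The degree of a vertex: the number of half edges incident with it (a loop counts
twice). -/
noncomputable def degree (v : V) : ℕ := {h : E × Bool | G.ep h = v}.ncard

/-- The degree of `v` in the subgraph with edge set `A`. -/
noncomputable def degIn (A : Set E) (v : V) : ℕ :=
  {h : E × Bool | h.1 ∈ A ∧ G.ep h = v}.ncard

/-- `G` is cubic: every vertex has degree 3. -/
def Cubic : Prop := ∀ v, G.degree v = 3

/-- Adjacency via an edge belonging to `A`. -/
def adjIn (A : Set E) (u v : V) : Prop :=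
  ∃ e ∈ A, (G.fst e = u ∧ G.snd e = v) ∨ (G.fst e = v ∧ G.snd e = u)

/-- Reachability inside the subgraph with edge set `A`. -/
def reachIn (A : Set E) : V → V → Prop := Relation.ReflTransGen (G.adjIn A)

/-- `G` is connected. -/
def Connected : Prop := ∀ u v, G.reachIn Set.univ u v

/-- `e` is a bridge (cut edge) of the underlying graph. -/
def IsBridge (e : E) : Prop := ¬ G.reachIn {e' | e' ≠ e} (G.fst e) (G.snd e)

/-- `G` is bridgeless. -/
def Bridgeless : Prop := ∀ e, ¬ G.IsBridge e

/-- The edge set `A` contains no circuit. -/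
def Acyclic (A : Set E) : Prop := ∀ c : Circuit G, ¬ c.edgeSet ⊆ A

/-- Every circuit with all edges in `A` is balanced. -/
def BalancedOn (A : Set E) : Prop := ∀ c : Circuit G, c.edgeSet ⊆ A → c.IsBalanced

/-- `G` is balanced: it contains no unbalanced circuit. -/
def Balanced : Prop := ∀ c : Circuit G, c.IsBalanced

/-- The number of negative edges in `A`. -/
noncomputable def negEdgeCount (A : Set E) : ℕ := {e ∈ A | G.sign e = -1}.ncard

/-- The edges of the connected component of `v` in the subgraph with edge set `A`. -/
def compEdges (A : Set E) (v : V) : Set E := {e ∈ A | G.reachIn A v (G.fst e)}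

/-- The number of (nonempty) components of the subgraph with edge set `A` containing an
odd number of negative edges. -/
noncomputable def oddCompCount (A : Set E) : ℕ :=
  {S : Set E | (∃ v, S = G.compEdges A v) ∧ S.Nonempty ∧ Odd (G.negEdgeCount S)}.ncard

/-- The number of unbalanced circuits (counted by their edge sets) all of whose edges
lie in `A`. -/
noncomputable def unbalCircCount (A : Set E) : ℕ :=
  {S : Set E | ∃ c : Circuit G, c.edgeSet = S ∧ S ⊆ A ∧ ¬ c.IsBalanced}.ncard

/-- Vertices incident with an edge of `A`. -/
def vertsIn (A : Set E) : Set V := {v | ∃ e ∈ A, G.fst e = v ∨ G.snd e = v}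

/-- A proper 3-edge-coloring: edges sharing an endvertex receive different colors. -/
def IsProper3EdgeColoring (col : E → Fin 3) : Prop :=
  ∀ e e', e ≠ e' →
    (G.fst e = G.fst e' ∨ G.fst e = G.snd e' ∨ G.snd e = G.fst e' ∨ G.snd e = G.snd e') →
    col e ≠ col e'

/-- `G` is 3-edge-colorable. -/
def ThreeEdgeColorable : Prop := ∃ col : E → Fin 3, G.IsProper3EdgeColoring col

/-- `G` is hamiltonian: it contains a circuit through all vertices. -/
def Hamiltonian : Prop := ∃ c : Circuit G, ∀ v : V, v ∈ c.vertSet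

end SignedGraph

namespace SignedGraph

section NZ2

variable {V E : Type} (G : SignedGraph V E)

open scoped Classical
set_option linter.unusedSectionVars false

lemma int_unit_mul {x y : ℤ} (hx : x = 1 ∨ x = -1) (hy : y = 1 ∨ y = -1) :
    x * y = 1 ∨ x * y = -1 := by
  rcases hx with h | h <;> rcases hy with h2 | h2 <;> rw [h, h2] <;> norm_num

lemma adjIn_symm {A : Set E} {u v : V} (h : G.adjIn A u v) : G.adjIn A v u := by
  obtain ⟨e, he, h | h⟩ := h
  · exact ⟨e, he, Or.inr h⟩
  · exact ⟨e, he, Or.inl h⟩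

lemma reach_symm {A : Set E} {u v : V} (h : G.reachIn A u v) : G.reachIn A v u := by
  induction h with
  | refl => exact Relation.ReflTransGen.refl
  | tail _ hadj ih =>
    exact Relation.ReflTransGen.trans
      (Relation.ReflTransGen.single (G.adjIn_symm hadj)) ih

lemma reach_mono {A A' : Set E} (hAA : A ⊆ A') {u v : V} (h : G.reachIn A u v) :
    G.reachIn A' u v := by
  refine Relation.ReflTransGen.mono ?_ _ _ h
  rintro x y ⟨e, he, hx⟩
  exact ⟨e, hAA he, hx⟩

lemma reach_of_edge {A : Set E} {u : V} {e : E} (he : e ∈ A)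
    (h : G.reachIn A u (G.fst e) ∨ G.reachIn A u (G.snd e)) :
    G.reachIn A u (G.fst e) ∧ G.reachIn A u (G.snd e) := by
  rcases h with h | h
  · exact ⟨h, h.tail ⟨e, he, Or.inl ⟨rfl, rfl⟩⟩⟩
  · exact ⟨h.tail ⟨e, he, Or.inr ⟨rfl, rfl⟩⟩, h⟩

lemma reach_head {A : Set E} {u v : V} (h : G.reachIn A u v) :
    u = v ∨ ∃ e ∈ A, G.fst e = u ∨ G.snd e = u := by
  rcases Relation.ReflTransGen.cases_head h with h | ⟨c, ⟨e, he, hc⟩, _⟩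
  · exact Or.inl h
  · right; exact ⟨e, he, by tauto⟩

lemma reach_restrict {A T : Set E} {u : V}
    (hcl : ∀ h ∈ A, ∀ w : V, (G.fst h = w ∨ G.snd h = w) → G.reachIn T u w → h ∈ T)
    {x : V} (hx : G.reachIn A u x) : G.reachIn T u x := by
  induction hx with
  | refl => exact Relation.ReflTransGen.refl
  | tail _ hadj ih =>
    rename_i y z _
    obtain ⟨e, he, hends⟩ := hadj
    have heT : e ∈ T := by
      rcases hends with ⟨h1, h2⟩ | ⟨h1, h2⟩
      · exact hcl e he y (Or.inl h1) ih
      · exact hcl e he y (Or.inr h2) ih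
    exact ih.tail ⟨e, heT, hends⟩

lemma reach_erase (S : Finset E) (e : E) (a a' : V)
    (he2 : (G.fst e = a ∧ G.snd e = a') ∨ (G.snd e = a ∧ G.fst e = a'))
    {x : V} (h : G.reachIn ↑S a x) :
    G.reachIn ↑(S.erase e) a x ∨ G.reachIn ↑(S.erase e) a' x := by
  induction h with
  | refl => exact Or.inl Relation.ReflTransGen.refl
  | tail _ hadj ih =>
    rename_i y z _
    obtain ⟨g, hg, hends⟩ := hadj
    by_cases hge : g = e
    · subst hge
      have hz : z = a ∨ z = a' := by
        rcases hends with ⟨h1, h2⟩ | ⟨h1, h2⟩ <;> rcases he2 with ⟨k1, k2⟩ | ⟨k1, k2⟩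
        · exact Or.inr (h2.symm.trans k2)
        · exact Or.inl (h2.symm.trans k1)
        · exact Or.inl (h1.symm.trans k1)
        · exact Or.inr (h1.symm.trans k2)
      rcases hz with rfl | rfl
      · exact Or.inl Relation.ReflTransGen.refl
      · exact Or.inr Relation.ReflTransGen.refl
    · have hgm : g ∈ (↑(S.erase e) : Set E) := by
        simp only [Finset.coe_erase, Set.mem_diff, Set.mem_singleton_iff]
        exact ⟨hg, hge⟩
      rcases ih with ih | ih
      · exact Or.inl (ih.tail ⟨g, hgm, hends⟩)
      · exact Or.inr (ih.tail ⟨g, hgm, hends⟩)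

variable [Fintype V] [Fintype E]

noncomputable def dg (S : Finset E) (v : V) : ℕ :=
  (Finset.univ.filter (fun h : E × Bool => h.1 ∈ S ∧ G.ep h = v)).card

noncomputable def B (τ : E × Bool → ℤ) (v : V) : ℤ :=
  ∑ h ∈ Finset.univ.filter (fun h : E × Bool => G.ep h = v), τ h

noncomputable def sg (S : Finset E) : ℤ := ∏ e ∈ S, G.sign e

lemma sg_unit (S : Finset E) : G.sg S = 1 ∨ G.sg S = -1 := by
  classical
  induction S using Finset.induction_on with
  | empty => left; simp [sg]
  | @insert a s hx ih =>
    rw [sg, Finset.prod_insert hx]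
    rcases G.sign_unit a with h | h <;> rcases ih with h2 | h2 <;>
      rw [sg] at h2 <;> rw [h, h2] <;> norm_num

lemma B_add (τ₁ τ₂ : E × Bool → ℤ) (v : V) :
    G.B (τ₁ + τ₂) v = G.B τ₁ v + G.B τ₂ v := by
  simp [B, Finset.sum_add_distrib]

lemma B_zero (v : V) : G.B 0 v = 0 := by simp [B]

lemma dg_sdiff {S T : Finset E} (hT : T ⊆ S) (v : V) :
    G.dg S v = G.dg T v + G.dg (S \ T) v := by
  rw [dg, dg, dg, ← Finset.card_union_of_disjoint]
  · congr 1
    ext h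
    simp only [Finset.mem_filter, Finset.mem_union, Finset.mem_univ, true_and,
      Finset.mem_sdiff]
    constructor
    · rintro ⟨hS, hv⟩
      by_cases hTm : h.1 ∈ T
      · exact Or.inl ⟨hTm, hv⟩
      · exact Or.inr ⟨⟨hS, hTm⟩, hv⟩
    · rintro (⟨hm, hv⟩ | ⟨⟨hm, _⟩, hv⟩)
      · exact ⟨hT hm, hv⟩
      · exact ⟨hm, hv⟩
  · rw [Finset.disjoint_left]
    intro h h1 h2
    simp only [Finset.mem_filter, Finset.mem_univ, true_and, Finset.mem_sdiff] at h1 h2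
    exact h2.1.2 h1.1

lemma dg_singleton (e : E) (v : V) :
    G.dg {e} v = (if G.fst e = v then 1 else 0) + (if G.snd e = v then 1 else 0) := by
  have h1 : Finset.univ.filter (fun h : E × Bool => h.1 ∈ ({e} : Finset E) ∧ G.ep h = v)
      = ({(e, true), (e, false)} : Finset (E × Bool)).filter (fun h => G.ep h = v) := by
    ext ⟨e', b⟩
    cases b <;> simp only [Finset.mem_filter] <;> simp [ep]
  rw [dg, h1]
  have h2 : ((e, true) : E × Bool) ≠ (e, false) := by simp
  have h3 : G.ep (e, true) = G.fst e := by simp [ep]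
  have h4 : G.ep (e, false) = G.snd e := by simp [ep]
  rw [Finset.filter_insert, Finset.filter_singleton, h3, h4]
  split_ifs <;> simp_all

lemma dg_erase {S : Finset E} {e : E} (he : e ∈ S) (v : V) :
    G.dg S v = G.dg (S.erase e) v
      + ((if G.fst e = v then 1 else 0) + (if G.snd e = v then 1 else 0)) := by
  have := G.dg_sdiff (Finset.singleton_subset_iff.mpr he) v
  rw [← Finset.erase_eq] at this
  rw [this, G.dg_singleton]
  ring

lemma exists_edge_at {S : Finset E} {v : V} (h : G.dg S v ≠ 0) :
    ∃ e ∈ S, G.fst e = v ∨ G.snd e = v := by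
  rw [dg] at h
  obtain ⟨⟨e, b⟩, hm⟩ := Finset.card_pos.mp (Nat.pos_of_ne_zero h)
  rw [Finset.mem_filter] at hm
  obtain ⟨-, he, hep⟩ := hm
  cases b
  · exact ⟨e, he, Or.inr (by simpa [ep] using hep)⟩
  · exact ⟨e, he, Or.inl (by simpa [ep] using hep)⟩

lemma dg_pos_of_edge {S : Finset E} {e : E} {v : V} (he : e ∈ S)
    (hv : G.fst e = v ∨ G.snd e = v) : G.dg S v ≠ 0 := by
  rcases hv with hv | hv
  · have : (e, true) ∈ Finset.univ.filter (fun h : E × Bool => h.1 ∈ S ∧ G.ep h = v) := by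
      rw [Finset.mem_filter]; simp [ep, he, hv]
    rw [dg]
    exact Finset.card_ne_zero_of_mem this
  · have : (e, false) ∈ Finset.univ.filter (fun h : E × Bool => h.1 ∈ S ∧ G.ep h = v) := by
      rw [Finset.mem_filter]; simp [ep, he, hv]
    rw [dg]
    exact Finset.card_ne_zero_of_mem this

lemma dg_sum (S : Finset E) : ∑ v, G.dg S v = 2 * S.card := by
  have key : (Finset.univ.filter (fun h : E × Bool => h.1 ∈ S)).card
      = ∑ v, G.dg S v := by
    rw [Finset.card_eq_sum_card_fiberwise (f := G.ep) (t := Finset.univ)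
      (fun x _ => Finset.mem_univ _)]
    refine Finset.sum_congr rfl fun v _ => ?_
    rw [dg, Finset.filter_filter]
  rw [← key]
  have h2 : Finset.univ.filter (fun h : E × Bool => h.1 ∈ S) = S ×ˢ Finset.univ := by
    ext ⟨e, b⟩; simp
  rw [h2, Finset.card_product]
  simp [Finset.card_univ, mul_comm]

lemma even_dg_of_forall (S : Finset E) (w : V) (h : ∀ v, v ≠ w → Even (G.dg S v)) :
    Even (G.dg S w) := by
  have h2 : Even (∑ v, G.dg S v) := ⟨S.card, by rw [dg_sum]; ring⟩
  rw [← Finset.add_sum_erase Finset.univ _ (Finset.mem_univ w)] at h2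
  have h3 : Even (∑ v ∈ Finset.univ.erase w, G.dg S v) :=
    Finset.even_sum _ (fun v hv => h v (Finset.ne_of_mem_erase hv))
  rw [Nat.even_add] at h2
  exact h2.mpr h3

noncomputable def tauE [DecidableEq E] (e : E) (x y : ℤ) : E × Bool → ℤ :=
  fun h => if h = (e, true) then x else if h = (e, false) then y else 0

lemma tauE_apply_ne (e : E) (x y : ℤ) (h : E × Bool) (hne : h.1 ≠ e) :
    tauE e x y h = 0 := by
  rw [tauE, if_neg, if_neg] <;> intro heq <;> exact hne (by rw [heq])

lemma tauE_true (e : E) (x y : ℤ) : tauE e x y (e, true) = x := by simp [tauE]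

lemma tauE_false (e : E) (x y : ℤ) : tauE e x y (e, false) = y := by simp [tauE]

lemma B_tauE (e : E) (p q : ℤ) (v : V) :
    G.B (tauE e p q) v = (if G.fst e = v then 1 else 0) * p
      + (if G.snd e = v then 1 else 0) * q := by
  classical
  have h2 : ((e, true) : E × Bool) ≠ (e, false) := by simp
  have hzero : ∀ x ∈ (Finset.univ : Finset (E × Bool)),
      x ∉ ({(e, true), (e, false)} : Finset (E × Bool)) →
      (if G.ep x = v then tauE e p q x else 0) = 0 := by
    intro x _ hx
    simp only [Finset.mem_insert, Finset.mem_singleton, not_or] at hx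
    simp [tauE, hx.1, hx.2]
  rw [B, Finset.sum_filter, ← Finset.sum_subset (Finset.subset_univ _) hzero,
    Finset.sum_pair h2]
  have e1 : G.ep (e, true) = G.fst e := by simp [ep]
  have e2 : G.ep (e, false) = G.snd e := by simp [ep]
  rw [e1, e2, tauE_true, tauE_false]
  split_ifs <;> ring

lemma lemD_empty (a b : V) (s : ℤ)
    (hpar : ∀ v : V, ¬ Even (G.dg (∅ : Finset E) v) ↔ (a ≠ b ∧ (v = a ∨ v = b))) :
    ∃ τ : E × Bool → ℤ,
      (∀ h : E × Bool, h.1 ∈ (∅ : Finset E) → (τ h = 1 ∨ τ h = -1)) ∧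
      (∀ h : E × Bool, h.1 ∉ (∅ : Finset E) → τ h = 0) ∧
      (∀ e ∈ (∅ : Finset E), τ (e, true) * τ (e, false) = - G.sign e) ∧
      (∀ v : V, G.B τ v = s * G.sg (∅ : Finset E) * (if b = v then 1 else 0)
        - s * (if a = v then 1 else 0)) := by
  have hab : a = b := by
    by_contra hne
    have h0 : G.dg (∅ : Finset E) a = 0 := by simp [dg]
    exact ((hpar a).mpr ⟨hne, Or.inl rfl⟩) (by rw [h0]; exact Even.zero)
  subst hab
  refine ⟨0, by simp, fun h _ => rfl, by simp, fun v => ?_⟩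
  rw [G.B_zero]
  have : G.sg (∅ : Finset E) = 1 := by simp [sg]
  rw [this]; ring


lemma parity_step {V : Type} (a b a' v : V) (x : ℕ)
    (h1 : ¬ Even (x + ((if a = v then 1 else 0) + (if a' = v then 1 else 0)))
      ↔ (a ≠ b ∧ (v = a ∨ v = b))) :
    ¬ Even x ↔ (a' ≠ b ∧ (v = a' ∨ v = b)) := by
  classical
  have g1 : v = b → a = b → a = v := fun h h' => h'.trans h.symm
  have g2 : v = b → a' = b → a' = v := fun h h' => h'.trans h.symm
  have g3 : a = v → ((v = b) ↔ (a = b)) := fun h => by rw [h]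
  have g4 : a' = v → ((v = b) ↔ (a' = b)) := fun h => by rw [h]
  have g5 : a = v → v = a := Eq.symm
  have g6 : a' = v → v = a' := Eq.symm
  by_cases hva : a = v <;> by_cases hva' : a' = v
  · rw [if_pos hva, if_pos hva'] at h1
    have hp2 : Even (x + (1 + 1)) ↔ Even x := by rw [Nat.even_add]; norm_num
    rw [hp2] at h1
    constructor
    · intro h
      obtain ⟨hab, -⟩ := h1.mp h
      exact ⟨fun hc => hab ((g3 hva).mp ((g4 hva').mpr hc)), Or.inl (g6 hva')⟩
    · rintro ⟨ha'b, -⟩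
      exact h1.mpr ⟨fun hc => ha'b ((g4 hva').mp ((g3 hva).mpr hc)), Or.inl (g5 hva)⟩
  · rw [if_pos hva, if_neg hva'] at h1
    have hp2 : Even (x + (1 + 0)) ↔ ¬ Even x := by rw [Nat.even_add]; norm_num
    rw [hp2, not_not] at h1
    constructor
    · intro h
      have hvb : v = b := by
        by_contra hvb
        exact h (h1.mpr ⟨fun hc => hvb ((g3 hva).mpr hc), Or.inl (g5 hva)⟩)
      exact ⟨fun hc => hva' (g2 hvb hc), Or.inr hvb⟩
    · rintro ⟨ha'b, hor⟩
      have hvb : v = b := by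
        rcases hor with h | h
        · exact absurd h.symm hva'
        · exact h
      intro hEv
      exact (h1.mp hEv).1 ((g3 hva).mp hvb)
  · rw [if_neg hva, if_pos hva'] at h1
    have hp2 : Even (x + (0 + 1)) ↔ ¬ Even x := by rw [Nat.even_add]; norm_num
    rw [hp2, not_not] at h1
    constructor
    · intro h
      have hvb : ¬ v = b := fun hvb =>
        h (h1.mpr ⟨fun hc => hva (g1 hvb hc), Or.inr hvb⟩)
      exact ⟨fun hc => hvb ((g4 hva').mpr hc), Or.inl (g6 hva')⟩
    · rintro ⟨ha'b, -⟩
      intro hEv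
      have h2 := h1.mp hEv
      rcases h2.2 with h | h
      · exact hva h.symm
      · exact ha'b ((g4 hva').mp h)
  · rw [if_neg hva, if_neg hva'] at h1
    have hp2 : Even (x + (0 + 0)) ↔ Even x := by rw [Nat.even_add]; norm_num
    rw [hp2] at h1
    constructor
    · intro h
      obtain ⟨hab, hor⟩ := h1.mp h
      have hvb : v = b := by
        rcases hor with h' | h'
        · exact absurd h'.symm hva
        · exact h'
      exact ⟨fun hc => hva' (g2 hvb hc), Or.inr hvb⟩
    · rintro ⟨ha'b, hor⟩
      have hvb : v = b := by
        rcases hor with h' | h'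
        · exact absurd h'.symm hva'
        · exact h'
      exact h1.mpr ⟨fun hc => hva (g1 hvb hc), Or.inr hvb⟩

set_option maxHeartbeats 3200000 in
lemma lemD : ∀ (n : ℕ) (S : Finset E) (a b : V) (s : ℤ), S.card ≤ n →
    (s = 1 ∨ s = -1) →
    (∀ e ∈ S, G.reachIn ↑S a (G.fst e)) →
    (∀ v : V, ¬ Even (G.dg S v) ↔ (a ≠ b ∧ (v = a ∨ v = b))) →
    ∃ τ : E × Bool → ℤ,
      (∀ h : E × Bool, h.1 ∈ S → (τ h = 1 ∨ τ h = -1)) ∧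
      (∀ h : E × Bool, h.1 ∉ S → τ h = 0) ∧
      (∀ e ∈ S, τ (e, true) * τ (e, false) = - G.sign e) ∧
      (∀ v : V, G.B τ v = s * G.sg S * (if b = v then 1 else 0)
        - s * (if a = v then 1 else 0)) := by
  intro n
  induction n with
  | zero =>
    intro S a b s hcard hs hconn hpar
    have hS : S = ∅ := Finset.card_eq_zero.mp (Nat.le_zero.mp hcard)
    subst hS
    exact G.lemD_empty a b s hpar
  | succ n ih =>
    intro S a b s hcard hs hconn hpar
    by_cases hSe : S = ∅
    · subst hSe; exact G.lemD_empty a b s hpar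
    obtain ⟨g0, hg0⟩ := Finset.nonempty_iff_ne_empty.mpr hSe
    have hss : s * s = 1 := by rcases hs with h | h <;> rw [h] <;> norm_num
    -- find an edge at a
    have hAedge : ∃ e ∈ S, G.fst e = a ∨ G.snd e = a := by
      rcases G.reach_head (hconn g0 hg0) with h | h
      · exact ⟨g0, hg0, Or.inl h.symm⟩
      · obtain ⟨e, he, hends⟩ := h
        exact ⟨e, Finset.mem_coe.mp he, hends⟩
    obtain ⟨e, heS, hea⟩ := hAedge
    obtain ⟨a', he2⟩ : ∃ w, (G.fst e = a ∧ G.snd e = w) ∨ (G.snd e = a ∧ G.fst e = w) := by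
      by_cases hf : G.fst e = a
      · exact ⟨G.snd e, Or.inl ⟨hf, rfl⟩⟩
      · rcases hea with h | h
        · exact absurd h hf
        · exact ⟨G.fst e, Or.inr ⟨h, rfl⟩⟩
    have hcard' : (S.erase e).card ≤ n := by
      rw [Finset.card_erase_of_mem heS]; omega
    have hkey : ∀ v, G.dg S v = G.dg (S.erase e) v
        + ((if a = v then 1 else 0) + (if a' = v then 1 else 0)) := by
      intro v
      rw [G.dg_erase heS v]
      rcases he2 with ⟨h1, h2⟩ | ⟨h1, h2⟩
      · rw [h1, h2]
      · rw [h1, h2]; ring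
    have hsgS : G.sg S = G.sign e * G.sg (S.erase e) := by
      rw [sg, sg, Finset.mul_prod_erase S G.sign heS]
    have hparS' : ∀ v : V, ¬ Even (G.dg (S.erase e) v) ↔ (a' ≠ b ∧ (v = a' ∨ v = b)) := by
      intro v
      have h1 := hpar v
      rw [hkey v] at h1
      exact parity_step a b a' v _ h1
    by_cases hreach : G.reachIn ↑(S.erase e) a' a
    · -- Case A : splice e in front of an euler trail of S.erase e from a' to b
      have hconn' : ∀ g ∈ S.erase e, G.reachIn ↑(S.erase e) a' (G.fst g) := by
        intro g hg
        rcases G.reach_erase S e a a' he2 (hconn g (Finset.mem_of_mem_erase hg)) with h | h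
        · exact hreach.trans h
        · exact h
      obtain ⟨τ', hu', hz', hp', hB'⟩ := ih (S.erase e) a' b (s * G.sign e) hcard'
        (int_unit_mul hs (G.sign_unit e)) hconn' hparS'
      obtain ⟨p, q, hpq, hpu, hqu, hpqB⟩ : ∃ p q : ℤ, p * q = - G.sign e ∧
          (p = 1 ∨ p = -1) ∧ (q = 1 ∨ q = -1) ∧
          ∀ v, (if G.fst e = v then 1 else 0) * p + (if G.snd e = v then 1 else 0) * q
            = (if a = v then 1 else 0) * (-s) + (if a' = v then 1 else 0) * (s * G.sign e) := by
        have hprod : (-s) * (s * G.sign e) = - G.sign e := by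
          linear_combination (-(G.sign e)) * hss
        have hpu' : -s = 1 ∨ -s = -1 := by
          rcases hs with h | h <;> rw [h] <;> norm_num
        rcases he2 with ⟨h1, h2⟩ | ⟨h1, h2⟩
        · exact ⟨-s, s * G.sign e, hprod, hpu', int_unit_mul hs (G.sign_unit e),
            fun v => by rw [h1, h2]⟩
        · exact ⟨s * G.sign e, -s, by linarith [hprod], int_unit_mul hs (G.sign_unit e),
            hpu', fun v => by rw [h1, h2]; ring⟩
      refine ⟨tauE e p q + τ', ?_, ?_, ?_, ?_⟩
      · intro h hhS
        by_cases hhe : h.1 = e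
        · have hz'h : τ' h = 0 := hz' h (by rw [hhe]; exact Finset.notMem_erase e S)
          obtain ⟨e1, b1⟩ := h
          simp only at hhe
          subst hhe
          cases b1
          · simpa [tauE_false, hz'h] using hqu
          · simpa [tauE_true, hz'h] using hpu
        · have h0 : tauE e p q h = 0 := tauE_apply_ne e p q h hhe
          have : τ' h = 1 ∨ τ' h = -1 := hu' h (Finset.mem_erase.mpr ⟨hhe, hhS⟩)
          simpa [h0] using this
      · intro h hh
        have h0 : tauE e p q h = 0 := tauE_apply_ne e p q h (fun hc => hh (hc ▸ heS))
        have h1 : τ' h = 0 := hz' h (fun hc => hh (Finset.mem_of_mem_erase hc))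
        simp [h0, h1]
      · intro g hg
        by_cases hge : g = e
        · subst hge
          have z1 : τ' (g, true) = 0 := hz' _ (Finset.notMem_erase g S)
          have z2 : τ' (g, false) = 0 := hz' _ (Finset.notMem_erase g S)
          simpa [tauE_true, tauE_false, z1, z2] using hpq
        · have z1 : tauE e p q (g, true) = 0 := tauE_apply_ne e p q _ hge
          have z2 : tauE e p q (g, false) = 0 := tauE_apply_ne e p q _ hge
          simpa [z1, z2] using hp' g (Finset.mem_erase.mpr ⟨hge, hg⟩)
      · intro v
        rw [G.B_add, G.B_tauE, hpqB v, hB' v, hsgS]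
        ring
    · -- Case B : S.erase e splits; a' component first traversed after the rest
      have haa' : a' ≠ a := fun h => hreach (h ▸ Relation.ReflTransGen.refl)
      set C1 := (S.erase e).filter (fun g => G.reachIn ↑(S.erase e) a' (G.fst g)) with hC1
      set C2 := S.erase e \ C1 with hC2
      have hC1sub : C1 ⊆ S.erase e := Finset.filter_subset _ _
      have hC2sub : C2 ⊆ S.erase e := Finset.sdiff_subset
      have F1 : ∀ g ∈ S.erase e, ∀ w, (G.fst g = w ∨ G.snd g = w) →
          G.reachIn ↑(S.erase e) a' w → g ∈ C1 := by
        intro g hg w hw hr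
        rw [hC1, Finset.mem_filter]
        refine ⟨hg, ?_⟩
        rcases hw with hw | hw
        · exact hw ▸ hr
        · exact (G.reach_of_edge (Finset.mem_coe.mpr hg) (Or.inr (hw ▸ hr))).1
      have F2 : ∀ v, G.reachIn ↑(S.erase e) a' v → G.dg C2 v = 0 := by
        intro v hv
        by_contra h
        obtain ⟨g, hgC2, hge⟩ := G.exists_edge_at h
        exact (Finset.mem_sdiff.mp hgC2).2
          (F1 g (Finset.mem_sdiff.mp hgC2).1 v hge hv)
      have F3 : ∀ v, ¬ G.reachIn ↑(S.erase e) a' v → G.dg C1 v = 0 := by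
        intro v hv
        by_contra h
        obtain ⟨g, hgC1, hge⟩ := G.exists_edge_at h
        have hrf : G.reachIn ↑(S.erase e) a' (G.fst g) := (Finset.mem_filter.mp hgC1).2
        rcases hge with hge | hge
        · exact hv (hge ▸ hrf)
        · exact hv (hge ▸ (G.reach_of_edge
            (Finset.mem_coe.mpr (hC1sub hgC1)) (Or.inl hrf)).2)
      have hsplit : ∀ v, G.dg (S.erase e) v = G.dg C1 v + G.dg C2 v :=
        fun v => G.dg_sdiff hC1sub v
      have hrb : G.reachIn ↑(S.erase e) a' b := by
        by_cases ha'b : a' = b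
        · exact ha'b ▸ Relation.ReflTransGen.refl
        by_contra hnrb
        have hodd : ¬ Even (G.dg C1 a') := by
          have h1 : G.dg C1 a' = G.dg (S.erase e) a' := by
            have h2 := hsplit a'
            have h3 := F2 a' Relation.ReflTransGen.refl
            omega
          rw [h1]
          exact (hparS' a').mpr ⟨ha'b, Or.inl rfl⟩
        refine hodd (G.even_dg_of_forall C1 a' fun v hva' => ?_)
        by_cases hr : G.reachIn ↑(S.erase e) a' v
        · have h1 : G.dg C1 v = G.dg (S.erase e) v := by
            have h2 := hsplit v
            have h3 := F2 v hr
            omega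
          rw [h1]
          by_contra hodd2
          rcases ((hparS' v).mp hodd2).2 with rfl | rfl
          · exact hva' rfl
          · exact hnrb hr
        · rw [F3 v hr]; exact Even.zero
      have conn1 : ∀ g ∈ C1, G.reachIn ↑C1 a' (G.fst g) := by
        intro g hg
        refine G.reach_restrict ?_ (Finset.mem_filter.mp hg).2
        intro h hh w hw hrw
        exact Finset.mem_coe.mpr (F1 h (Finset.mem_coe.mp hh) w hw
          (G.reach_mono (Finset.coe_subset.mpr hC1sub) hrw))
      have par1 : ∀ v : V, ¬ Even (G.dg C1 v) ↔ (a' ≠ b ∧ (v = a' ∨ v = b)) := by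
        intro v
        by_cases hr : G.reachIn ↑(S.erase e) a' v
        · have h1 : G.dg C1 v = G.dg (S.erase e) v := by
            have h2 := hsplit v
            have h3 := F2 v hr
            omega
          rw [h1]; exact hparS' v
        · rw [F3 v hr]
          constructor
          · intro h; exact absurd Even.zero h
          · rintro ⟨h1, rfl | rfl⟩
            · exact absurd Relation.ReflTransGen.refl hr
            · exact absurd hrb hr
      have conn2 : ∀ g ∈ C2, G.reachIn ↑C2 a (G.fst g) := by
        intro g hg
        have hgS' : g ∈ S.erase e := (Finset.mem_sdiff.mp hg).1
        have hgnC1 : g ∉ C1 := (Finset.mem_sdiff.mp hg).2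
        have hr1 : G.reachIn ↑(S.erase e) a (G.fst g) := by
          rcases G.reach_erase S e a a' he2
              (hconn g (Finset.mem_of_mem_erase hgS')) with h | h
          · exact h
          · exact absurd (F1 g hgS' (G.fst g) (Or.inl rfl) h) hgnC1
        refine G.reach_restrict ?_ hr1
        intro h hh w hw hrw
        have hhS' : h ∈ S.erase e := Finset.mem_coe.mp hh
        by_cases hhC1 : h ∈ C1
        · exfalso
          have hra'w : G.reachIn ↑(S.erase e) a' w := by
            have hrf : G.reachIn ↑(S.erase e) a' (G.fst h) := (Finset.mem_filter.mp hhC1).2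
            rcases hw with hw | hw
            · exact hw ▸ hrf
            · exact hw ▸ (G.reach_of_edge (Finset.mem_coe.mpr hhS') (Or.inl hrf)).2
          have hrwa : G.reachIn ↑(S.erase e) w a :=
            G.reach_symm (G.reach_mono (Finset.coe_subset.mpr hC2sub) hrw)
          exact hreach (hra'w.trans hrwa)
        · exact Finset.mem_coe.mpr (Finset.mem_sdiff.mpr ⟨hhS', hhC1⟩)
      have par2 : ∀ v : V, ¬ Even (G.dg C2 v) ↔ (a ≠ a ∧ (v = a ∨ v = a)) := by
        intro v
        have hev : Even (G.dg C2 v) := by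
          by_cases hr : G.reachIn ↑(S.erase e) a' v
          · rw [F2 v hr]; exact Even.zero
          · have h1 : G.dg C2 v = G.dg (S.erase e) v := by
              have h2 := hsplit v
              have h3 := F3 v hr
              omega
            rw [h1]
            by_contra hodd
            rcases ((hparS' v).mp hodd).2 with rfl | rfl
            · exact hr Relation.ReflTransGen.refl
            · exact hr hrb
        simp [hev]
      have hc1 : C1.card ≤ n := le_trans (Finset.card_le_card hC1sub) hcard'
      have hc2 : C2.card ≤ n := le_trans (Finset.card_le_card hC2sub) hcard'
      obtain ⟨τ2, hu2, hz2, hp2, hB2⟩ := ih C2 a a s hc2 hs conn2 par2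
      have hs1 : s * G.sg C2 * G.sign e = 1 ∨ s * G.sg C2 * G.sign e = -1 :=
        int_unit_mul (int_unit_mul hs (G.sg_unit C2)) (G.sign_unit e)
      obtain ⟨τ1, hu1, hz1, hp1, hB1⟩ := ih C1 a' b (s * G.sg C2 * G.sign e) hc1 hs1 conn1 par1
      have hσ2 : G.sg C2 * G.sg C2 = 1 := by
        rcases G.sg_unit C2 with h | h <;> rw [h] <;> norm_num
      have hsgS' : G.sg C2 * G.sg C1 = G.sg (S.erase e) := by
        rw [sg, sg, sg, hC2]
        exact Finset.prod_sdiff hC1sub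
      obtain ⟨p, q, hpq, hpu, hqu, hpqB⟩ : ∃ p q : ℤ, p * q = - G.sign e ∧
          (p = 1 ∨ p = -1) ∧ (q = 1 ∨ q = -1) ∧
          ∀ v, (if G.fst e = v then 1 else 0) * p + (if G.snd e = v then 1 else 0) * q
            = (if a = v then 1 else 0) * (-(s * G.sg C2))
              + (if a' = v then 1 else 0) * (s * G.sg C2 * G.sign e) := by
        have hprod : (-(s * G.sg C2)) * (s * G.sg C2 * G.sign e) = - G.sign e := by
          linear_combination (-(G.sg C2 * G.sg C2) * G.sign e) * hss + (-(G.sign e)) * hσ2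
        have hpu' : -(s * G.sg C2) = 1 ∨ -(s * G.sg C2) = -1 := by
          rcases int_unit_mul hs (G.sg_unit C2) with h | h <;> rw [h] <;> norm_num
        rcases he2 with ⟨h1, h2⟩ | ⟨h1, h2⟩
        · exact ⟨-(s * G.sg C2), s * G.sg C2 * G.sign e, hprod, hpu', hs1,
            fun v => by rw [h1, h2]⟩
        · exact ⟨s * G.sg C2 * G.sign e, -(s * G.sg C2), by linarith [hprod], hs1,
            hpu', fun v => by rw [h1, h2]; ring⟩
      have hmem3 : ∀ g : E, g ∈ S → g = e ∨ g ∈ C1 ∨ g ∈ C2 := by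
        intro g hg
        by_cases hge : g = e
        · exact Or.inl hge
        by_cases hgC1 : g ∈ C1
        · exact Or.inr (Or.inl hgC1)
        · exact Or.inr (Or.inr (Finset.mem_sdiff.mpr ⟨Finset.mem_erase.mpr ⟨hge, hg⟩, hgC1⟩))
      have heC1 : e ∉ C1 := fun h => Finset.notMem_erase e S (hC1sub h)
      have heC2 : e ∉ C2 := fun h => Finset.notMem_erase e S (hC2sub h)
      have hd12 : ∀ g : E, g ∈ C1 → g ∉ C2 := fun g h1 h2 => (Finset.mem_sdiff.mp h2).2 h1
      refine ⟨tauE e p q + (τ1 + τ2), ?_, ?_, ?_, ?_⟩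
      · intro h hhS
        rcases hmem3 h.1 hhS with hhe | hhC1 | hhC2
        · have z1 : τ1 h = 0 := hz1 h (by rw [hhe]; exact heC1)
          have z2 : τ2 h = 0 := hz2 h (by rw [hhe]; exact heC2)
          obtain ⟨e1, b1⟩ := h
          simp only at hhe
          subst hhe
          cases b1
          · simpa [tauE_false, z1, z2] using hqu
          · simpa [tauE_true, z1, z2] using hpu
        · have z0 : tauE e p q h = 0 :=
            tauE_apply_ne e p q h (fun hc => heC1 (hc ▸ hhC1))
          have z2 : τ2 h = 0 := hz2 h (hd12 h.1 hhC1)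
          simpa [z0, z2] using hu1 h hhC1
        · have z0 : tauE e p q h = 0 :=
            tauE_apply_ne e p q h (fun hc => heC2 (hc ▸ hhC2))
          have z1 : τ1 h = 0 := hz1 h (fun hc => (Finset.mem_sdiff.mp hhC2).2 hc)
          simpa [z0, z1] using hu2 h hhC2
      · intro h hh
        have z0 : tauE e p q h = 0 := tauE_apply_ne e p q h (fun hc => hh (hc ▸ heS))
        have z1 : τ1 h = 0 := hz1 h (fun hc => hh (Finset.mem_of_mem_erase (hC1sub hc)))
        have z2 : τ2 h = 0 := hz2 h (fun hc => hh (Finset.mem_of_mem_erase (hC2sub hc)))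
        simp [z0, z1, z2]
      · intro g hg
        rcases hmem3 g hg with rfl | hgC1 | hgC2
        · have z1t : τ1 (g, true) = 0 := hz1 _ heC1
          have z1f : τ1 (g, false) = 0 := hz1 _ heC1
          have z2t : τ2 (g, true) = 0 := hz2 _ heC2
          have z2f : τ2 (g, false) = 0 := hz2 _ heC2
          simpa [tauE_true, tauE_false, z1t, z1f, z2t, z2f] using hpq
        · have z0t : tauE e p q (g, true) = 0 :=
            tauE_apply_ne e p q _ (fun hc => heC1 (hc ▸ hgC1))
          have z0f : tauE e p q (g, false) = 0 :=
            tauE_apply_ne e p q _ (fun hc => heC1 (hc ▸ hgC1))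
          have z2t : τ2 (g, true) = 0 := hz2 _ (hd12 g hgC1)
          have z2f : τ2 (g, false) = 0 := hz2 _ (hd12 g hgC1)
          simpa [z0t, z0f, z2t, z2f] using hp1 g hgC1
        · have z0t : tauE e p q (g, true) = 0 :=
            tauE_apply_ne e p q _ (fun hc => heC2 (hc ▸ hgC2))
          have z0f : tauE e p q (g, false) = 0 :=
            tauE_apply_ne e p q _ (fun hc => heC2 (hc ▸ hgC2))
          have z1t : τ1 (g, true) = 0 := hz1 _ (fun hc => (Finset.mem_sdiff.mp hgC2).2 hc)
          have z1f : τ1 (g, false) = 0 := hz1 _ (fun hc => (Finset.mem_sdiff.mp hgC2).2 hc)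
          simpa [z0t, z0f, z1t, z1f] using hp2 g hgC2
      · intro v
        rw [G.B_add, G.B_add, G.B_tauE, hpqB v, hB1 v, hB2 v, hsgS, ← hsgS']
        ring

lemma negEdgeCount_coe (S : Finset E) :
    G.negEdgeCount ↑S = (S.filter (fun e => G.sign e = -1)).card := by
  rw [negEdgeCount]
  have h : {e ∈ (↑S : Set E) | G.sign e = -1}
      = ↑(S.filter fun e => G.sign e = -1) := by
    ext g; simp
  rw [h, Set.ncard_coe_finset]

lemma sg_of_even_neg (S : Finset E) (h : Even (G.negEdgeCount ↑S)) : G.sg S = 1 := by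
  rw [G.negEdgeCount_coe] at h
  have h1 : G.sg S = (∏ e ∈ S.filter (fun e => G.sign e = -1), G.sign e)
      * ∏ e ∈ S.filter (fun e => ¬ G.sign e = -1), G.sign e := by
    rw [sg, Finset.prod_filter_mul_prod_filter_not]
  have h2 : ∏ e ∈ S.filter (fun e => G.sign e = -1), G.sign e
      = (-1 : ℤ) ^ (S.filter (fun e => G.sign e = -1)).card := by
    rw [Finset.prod_congr rfl (fun e he => (Finset.mem_filter.mp he).2), Finset.prod_const]
  have h3 : ∏ e ∈ S.filter (fun e => ¬ G.sign e = -1), G.sign e = 1 :=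
    Finset.prod_eq_one (fun e he =>
      (G.sign_unit e).resolve_right (Finset.mem_filter.mp he).2)
  rw [h1, h2, h3, h.neg_one_pow, one_mul]

set_option maxHeartbeats 1600000 in
lemma lemMain : ∀ (n : ℕ) (A : Finset E), A.card ≤ n →
    (∀ v, Even (G.dg A v)) →
    (∀ v, Even (G.negEdgeCount (G.compEdges ↑A v))) →
    ∃ τ : E × Bool → ℤ,
      (∀ h : E × Bool, h.1 ∈ A → (τ h = 1 ∨ τ h = -1)) ∧
      (∀ h : E × Bool, h.1 ∉ A → τ h = 0) ∧
      (∀ e ∈ A, τ (e, true) * τ (e, false) = - G.sign e) ∧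
      (∀ v : V, G.B τ v = 0) := by
  intro n
  induction n with
  | zero =>
    intro A hcard _ _
    have hA : A = ∅ := Finset.card_eq_zero.mp (Nat.le_zero.mp hcard)
    subst hA
    exact ⟨0, by simp, fun h _ => rfl, by simp, fun v => G.B_zero v⟩
  | succ n ih =>
    intro A hcard hdeg hneg
    by_cases hA : A = ∅
    · subst hA
      exact ⟨0, by simp, fun h _ => rfl, by simp, fun v => G.B_zero v⟩
    obtain ⟨g0, hg0⟩ := Finset.nonempty_iff_ne_empty.mpr hA
    set a := G.fst g0 with ha
    set Sc := A.filter (fun g => G.reachIn ↑A a (G.fst g)) with hSc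
    have hScsub : Sc ⊆ A := Finset.filter_subset _ _
    have hg0Sc : g0 ∈ Sc := Finset.mem_filter.mpr ⟨hg0, Relation.ReflTransGen.refl⟩
    have F1 : ∀ g ∈ A, ∀ w, (G.fst g = w ∨ G.snd g = w) →
        G.reachIn ↑A a w → g ∈ Sc := by
      intro g hg w hw hr
      rw [hSc, Finset.mem_filter]
      refine ⟨hg, ?_⟩
      rcases hw with hw | hw
      · exact hw ▸ hr
      · exact (G.reach_of_edge (Finset.mem_coe.mpr hg) (Or.inr (hw ▸ hr))).1
    have F3 : ∀ v, ¬ G.reachIn ↑A a v → G.dg Sc v = 0 := by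
      intro v hv
      by_contra h
      obtain ⟨g, hgSc, hge⟩ := G.exists_edge_at h
      have hrf : G.reachIn ↑A a (G.fst g) := (Finset.mem_filter.mp hgSc).2
      rcases hge with hge | hge
      · exact hv (hge ▸ hrf)
      · exact hv (hge ▸ (G.reach_of_edge
          (Finset.mem_coe.mpr (hScsub hgSc)) (Or.inl hrf)).2)
    have F2 : ∀ v, G.reachIn ↑A a v → G.dg (A \ Sc) v = 0 := by
      intro v hv
      by_contra h
      obtain ⟨g, hgd, hge⟩ := G.exists_edge_at h
      exact (Finset.mem_sdiff.mp hgd).2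
        (F1 g (Finset.mem_sdiff.mp hgd).1 v hge hv)
    have hsplit : ∀ v, G.dg A v = G.dg Sc v + G.dg (A \ Sc) v :=
      fun v => G.dg_sdiff hScsub v
    have conn : ∀ g ∈ Sc, G.reachIn ↑Sc a (G.fst g) := by
      intro g hg
      refine G.reach_restrict ?_ (Finset.mem_filter.mp hg).2
      intro h hh w hw hrw
      exact Finset.mem_coe.mpr (F1 h (Finset.mem_coe.mp hh) w hw
        (G.reach_mono (Finset.coe_subset.mpr hScsub) hrw))
    have par : ∀ v : V, ¬ Even (G.dg Sc v) ↔ (a ≠ a ∧ (v = a ∨ v = a)) := by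
      intro v
      have hev : Even (G.dg Sc v) := by
        by_cases hr : G.reachIn ↑A a v
        · have h1 : G.dg Sc v = G.dg A v := by
            have h2 := hsplit v
            have h3 := F2 v hr
            omega
          rw [h1]; exact hdeg v
        · rw [F3 v hr]; exact Even.zero
      simp [hev]
    obtain ⟨τS, hu1, hz1, hp1, hB1⟩ :=
      G.lemD Sc.card Sc a a 1 le_rfl (Or.inl rfl) conn par
    have hcomp : G.compEdges ↑A a = ↑Sc := by
      ext g
      simp [compEdges, hSc]
    have hsg : G.sg Sc = 1 := by
      refine G.sg_of_even_neg Sc ?_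
      rw [← hcomp]
      exact hneg a
    have hcard2 : (A \ Sc).card ≤ n := by
      have h1 : Sc.card ≠ 0 := Finset.card_ne_zero_of_mem hg0Sc
      have h2 := Finset.card_sdiff_of_subset hScsub
      have h3 := Finset.card_le_card hScsub
      omega
    have hdeg2 : ∀ v, Even (G.dg (A \ Sc) v) := by
      intro v
      by_cases hr : G.reachIn ↑A a v
      · rw [F2 v hr]; exact Even.zero
      · have h1 : G.dg (A \ Sc) v = G.dg A v := by
          have h2 := hsplit v
          have h3 := F3 v hr
          omega
        rw [h1]; exact hdeg v
    have hneg2 : ∀ v, Even (G.negEdgeCount (G.compEdges ↑(A \ Sc) v)) := by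
      intro v
      by_cases hr : G.reachIn ↑A a v
      · have hempty : G.compEdges ↑(A \ Sc) v = ∅ := by
          ext g
          simp only [compEdges, Set.mem_setOf_eq, Set.mem_empty_iff_false, iff_false,
            not_and, Finset.mem_coe, Finset.coe_sdiff, Set.mem_diff]
          rintro ⟨hg1, hg2⟩ hrg
          have hrg2 : G.reachIn ↑A v (G.fst g) :=
            G.reach_mono (by intro x hx; exact (Finset.mem_coe.mpr
              ((Finset.mem_sdiff.mp (Finset.mem_coe.mp (by
                rw [← Finset.coe_sdiff] at hx; exact hx))).1))) hrg
          exact hg2 (Finset.mem_coe.mp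
            (Finset.mem_coe.mpr (F1 g (Finset.mem_coe.mp (Finset.mem_coe.mpr hg1)) _
              (Or.inl rfl) (hr.trans hrg2))))
        rw [hempty]
        have h0 : G.negEdgeCount (∅ : Set E) = 0 := by
          have : {e ∈ (∅ : Set E) | G.sign e = -1} = ∅ := by ext g; simp
          rw [negEdgeCount, this, Set.ncard_empty]
        rw [h0]
        exact Even.zero
      · have heq : G.compEdges ↑(A \ Sc) v = G.compEdges ↑A v := by
          ext g
          simp only [compEdges, Set.mem_setOf_eq, Finset.coe_sdiff, Set.mem_diff,
            Finset.mem_coe]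
          constructor
          · rintro ⟨⟨hg1, hg2⟩, hg3⟩
            exact ⟨hg1, G.reach_mono (by
              rw [← Finset.coe_sdiff]
              exact Finset.coe_subset.mpr Finset.sdiff_subset) hg3⟩
          · rintro ⟨hg1, hg2⟩
            have hgSc : g ∉ Sc := by
              intro hgSc
              exact hr (((Finset.mem_filter.mp hgSc).2).trans (G.reach_symm hg2))
            refine ⟨⟨hg1, fun hc => hgSc (Finset.mem_coe.mp hc)⟩, ?_⟩
            have hrest : G.reachIn ↑(A \ Sc) v (G.fst g) := by
              refine G.reach_restrict ?_ hg2
              intro h hh w hw hrw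
              by_cases hhSc : h ∈ Sc
              · exfalso
                have hra : G.reachIn ↑A a w := by
                  have hrf : G.reachIn ↑A a (G.fst h) := (Finset.mem_filter.mp hhSc).2
                  rcases hw with hw | hw
                  · exact hw ▸ hrf
                  · exact hw ▸ (G.reach_of_edge hh (Or.inl hrf)).2
                have hwv : G.reachIn ↑A w v := G.reach_symm (G.reach_mono
                  (Finset.coe_subset.mpr Finset.sdiff_subset) hrw)
                exact hr (hra.trans hwv)
              · exact Finset.mem_coe.mpr
                  (Finset.mem_sdiff.mpr ⟨Finset.mem_coe.mp hh, hhSc⟩)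
            exact G.reach_mono (le_of_eq (Finset.coe_sdiff A Sc)) hrest
        rw [heq]
        exact hneg v
    obtain ⟨τR, hu2, hz2, hp2, hB2⟩ := ih (A \ Sc) hcard2 hdeg2 hneg2
    have hmem2 : ∀ g : E, g ∈ A → g ∈ Sc ∨ g ∈ A \ Sc := by
      intro g hg
      by_cases hgSc : g ∈ Sc
      · exact Or.inl hgSc
      · exact Or.inr (Finset.mem_sdiff.mpr ⟨hg, hgSc⟩)
    refine ⟨τS + τR, ?_, ?_, ?_, ?_⟩
    · intro h hhA
      rcases hmem2 h.1 hhA with hh | hh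
      · have z2 : τR h = 0 := hz2 h (fun hc => (Finset.mem_sdiff.mp hc).2 hh)
        simpa [z2] using hu1 h hh
      · have z1 : τS h = 0 := hz1 h (Finset.mem_sdiff.mp hh).2
        simpa [z1] using hu2 h hh
    · intro h hh
      have z1 : τS h = 0 := hz1 h (fun hc => hh (hScsub hc))
      have z2 : τR h = 0 := hz2 h (fun hc => hh (Finset.mem_sdiff.mp hc).1)
      simp [z1, z2]
    · intro g hg
      rcases hmem2 g hg with hh | hh
      · have z2t : τR (g, true) = 0 := hz2 _ (fun hc => (Finset.mem_sdiff.mp hc).2 hh)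
        have z2f : τR (g, false) = 0 := hz2 _ (fun hc => (Finset.mem_sdiff.mp hc).2 hh)
        simpa [z2t, z2f] using hp1 g hh
      · have z1t : τS (g, true) = 0 := hz1 _ (Finset.mem_sdiff.mp hh).2
        have z1f : τS (g, false) = 0 := hz1 _ (Finset.mem_sdiff.mp hh).2
        simpa [z1t, z1f] using hp2 g hh
    · intro v
      rw [G.B_add, hB1 v, hB2 v, hsg]
      ring

lemma degree_eq_card (v : V) :
    G.degree v = (Finset.univ.filter (fun h : E × Bool => G.ep h = v)).card := by
  rw [degree]
  have h : {h : E × Bool | G.ep h = v}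
      = ↑(Finset.univ.filter (fun h : E × Bool => G.ep h = v)) := by
    ext h; simp
  rw [h, Set.ncard_coe_finset]

lemma dg_univ_eq_degree (v : V) : G.dg Finset.univ v = G.degree v := by
  rw [dg, G.degree_eq_card]
  congr 1
  ext h
  simp

lemma boundary_eq_B (τ : E × Bool → ℤ) (f : E → ℤ) (v : V) :
    G.boundary τ f v = G.B (fun h => τ h * f h.1) v := by
  rw [boundary]
  have h : {h : E × Bool | G.ep h = v}
      = ↑(Finset.univ.filter (fun h : E × Bool => G.ep h = v)) := by
    ext h; simp
  rw [h, finsum_mem_coe_finset]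
  rfl

lemma even_card_of_sum_pm {α : Type} (F : Finset α) (g : α → ℤ)
    (hu : ∀ x ∈ F, g x = 1 ∨ g x = -1) (h0 : ∑ x ∈ F, g x = 0) : Even F.card := by
  have h1 := Finset.sum_int_mod F 2 g
  have h2 : ∀ x ∈ F, g x % 2 = 1 := by
    intro x hx
    rcases hu x hx with h | h <;> rw [h] <;> decide
  rw [Finset.sum_congr rfl h2, Finset.sum_const, h0, nsmul_eq_mul, mul_one] at h1
  rw [Nat.even_iff]
  omega

end NZ2
end SignedGraph

/-- A signed graph admits a nowhere-zero 2-flow if and only if each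
component is eulerian (connected with all degrees even) and has an even number of
negative edges. -/
theorem stmt_6 {V E : Type} [Fintype V] [Fintype E] (G : SignedGraph V E) :
    G.HasNZFlow 2 ↔
      (∀ v : V, Even (G.degree v)) ∧
      (∀ v : V, Even (G.negEdgeCount (G.compEdges Set.univ v))) := by
  classical
  constructor
  · rintro ⟨τ, f, ⟨⟨hτu, hτp⟩, hb, h0⟩, hnz⟩
    have hf : ∀ e, f e = 1 ∨ f e = -1 := by
      intro e
      have h1 := hb e
      have h2 := hnz e
      rw [abs_le] at h1
      omega
    set τ' : E × Bool → ℤ := fun h => τ h * f h.1 with hτ'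
    have hτ'u : ∀ h, τ' h = 1 ∨ τ' h = -1 :=
      fun h => SignedGraph.int_unit_mul (hτu h) (hf h.1)
    have hB0 : ∀ v, G.B τ' v = 0 := by
      intro v
      rw [← G.boundary_eq_B]
      exact h0 v
    constructor
    · intro v
      rw [G.degree_eq_card]
      exact SignedGraph.even_card_of_sum_pm _ τ' (fun x _ => hτ'u x) (hB0 v)
    · intro v0
      set Cfin := Finset.univ.filter (fun e : E => G.reachIn Set.univ v0 (G.fst e))
        with hCfin
      have hcomp : G.compEdges Set.univ v0 = ↑Cfin := by
        ext g
        simp [SignedGraph.compEdges, hCfin]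
      have hprodset : Finset.univ.filter (fun h : E × Bool => h.1 ∈ Cfin)
          = Cfin ×ˢ Finset.univ := by
        ext ⟨e, b⟩; simp
      have h1 : ∑ h ∈ Finset.univ.filter (fun h : E × Bool => h.1 ∈ Cfin), τ' h
          = ∑ v, ∑ h ∈ Finset.univ.filter
              (fun h : E × Bool => h.1 ∈ Cfin ∧ G.ep h = v), τ' h := by
        rw [← Finset.sum_fiberwise_of_maps_to (g := G.ep) (t := Finset.univ)
          (fun x _ => Finset.mem_univ _)]
        refine Finset.sum_congr rfl fun v _ => ?_
        rw [Finset.filter_filter]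
      have h2 : ∀ v, ∑ h ∈ Finset.univ.filter
          (fun h : E × Bool => h.1 ∈ Cfin ∧ G.ep h = v), τ' h = 0 := by
        intro v
        by_cases hr : G.reachIn Set.univ v0 v
        · have hfe : Finset.univ.filter (fun h : E × Bool => h.1 ∈ Cfin ∧ G.ep h = v)
              = Finset.univ.filter (fun h : E × Bool => G.ep h = v) := by
            ext h
            simp only [Finset.mem_filter, Finset.mem_univ, true_and,
              and_iff_right_iff_imp]
            intro hep
            rw [hCfin, Finset.mem_filter]
            refine ⟨Finset.mem_univ _, ?_⟩
            obtain ⟨e1, b1⟩ := h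
            have hinc : G.fst e1 = v ∨ G.snd e1 = v := by
              cases b1
              · right; simpa [SignedGraph.ep] using hep
              · left; simpa [SignedGraph.ep] using hep
            rcases hinc with hi | hi
            · exact hi ▸ hr
            · exact (G.reach_of_edge (Set.mem_univ e1) (Or.inr (hi ▸ hr))).1
          rw [hfe]
          exact hB0 v
        · have hfe : Finset.univ.filter
              (fun h : E × Bool => h.1 ∈ Cfin ∧ G.ep h = v) = ∅ := by
            ext h
            simp only [Finset.mem_filter, Finset.mem_univ, true_and,
              Finset.notMem_empty, iff_false, not_and]
            intro hC hep
            apply hr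
            rw [hCfin, Finset.mem_filter] at hC
            obtain ⟨e1, b1⟩ := h
            have hrf : G.reachIn Set.univ v0 (G.fst e1) := hC.2
            cases b1
            · have : G.snd e1 = v := by simpa [SignedGraph.ep] using hep
              exact this ▸ (G.reach_of_edge (Set.mem_univ e1) (Or.inl hrf)).2
            · have : G.fst e1 = v := by simpa [SignedGraph.ep] using hep
              exact this ▸ hrf
          rw [hfe]
          simp
      have h3 : ∑ h ∈ Finset.univ.filter (fun h : E × Bool => h.1 ∈ Cfin), τ' h
          = ∑ e ∈ Cfin, (τ' (e, true) + τ' (e, false)) := by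
        rw [hprodset, Finset.sum_product]
        refine Finset.sum_congr rfl fun e _ => ?_
        rw [Fintype.sum_bool]
      have hsum : ∑ e ∈ Cfin, (τ' (e, true) + τ' (e, false)) = 0 := by
        rw [← h3, h1, Finset.sum_congr rfl (fun v _ => h2 v), Finset.sum_const_zero]
      have hmod : ∀ e ∈ Cfin, (τ' (e, true) + τ' (e, false)) % 4
          = (if G.sign e = -1 then (2 : ℤ) else 0) % 4 := by
        intro e _
        have hpe : τ' (e, true) * τ' (e, false)
            = (τ (e, true) * τ (e, false)) * (f e * f e) := by
          rw [hτ']; ring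
        have hfe2 : f e * f e = 1 := by rcases hf e with h | h <;> rw [h] <;> norm_num
        have hprod : τ' (e, true) * τ' (e, false) = - G.sign e := by
          rw [hpe, hτp e, hfe2, mul_one]
        rcases G.sign_unit e with hs | hs
        · rw [if_neg (by rw [hs]; norm_num)]
          rcases hτ'u (e, true) with ht | ht <;> rcases hτ'u (e, false) with hu2 | hu2 <;>
            rw [ht, hu2] at hprod ⊢ <;> rw [hs] at hprod <;> revert hprod <;> decide
        · rw [if_pos hs]
          rcases hτ'u (e, true) with ht | ht <;> rcases hτ'u (e, false) with hu2 | hu2 <;>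
            rw [ht, hu2] at hprod ⊢ <;> rw [hs] at hprod <;> revert hprod <;> decide
      have h4 : (∑ e ∈ Cfin, if G.sign e = -1 then (2 : ℤ) else 0) % 4
          = (∑ e ∈ Cfin, (τ' (e, true) + τ' (e, false))) % 4 := by
        rw [Finset.sum_int_mod, Finset.sum_congr rfl (fun e he => (hmod e he).symm),
          ← Finset.sum_int_mod]
      rw [hsum] at h4
      have h5 : ∑ e ∈ Cfin, (if G.sign e = -1 then (2 : ℤ) else 0)
          = 2 * (Cfin.filter (fun e => G.sign e = -1)).card := by
        rw [← Finset.sum_filter, Finset.sum_const, nsmul_eq_mul]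
        ring
      rw [hcomp, G.negEdgeCount_coe, Nat.even_iff]
      rw [h5] at h4
      omega
  · rintro ⟨hdeg, hneg⟩
    have hdeg' : ∀ v, Even (G.dg Finset.univ v) := by
      intro v
      rw [G.dg_univ_eq_degree]
      exact hdeg v
    have hneg' : ∀ v, Even (G.negEdgeCount (G.compEdges ↑(Finset.univ : Finset E) v)) := by
      intro v
      rw [Finset.coe_univ]
      exact hneg v
    obtain ⟨τ, hu, hz, hp, hB⟩ :=
      G.lemMain (Finset.univ : Finset E).card Finset.univ le_rfl hdeg' hneg'
    refine ⟨τ, fun _ => 1, ⟨⟨fun h => hu h (Finset.mem_univ _),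
      fun e => hp e (Finset.mem_univ _)⟩, fun e => by norm_num, fun v => ?_⟩,
      fun e => one_ne_zero⟩
    rw [G.boundary_eq_B]
    have h : (fun h : E × Bool => τ h * (1 : ℤ)) = τ := funext fun h => mul_one _
    rw [h]
    exact hB v
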